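/- For any Boolean function f : {0,1}^n → {0,1}, the energy complexity of f satisfies EC(f) ≤ 3n − 2. -/

import Mathlib

/-- A gate in a Boolean circuit over the standard basis `{∨₂, ∧₂, ¬}`:
input gates labelled by variables, constant gates, and `∧`/`∨`/`¬` gates
whose arguments are (indices of) earlier gates. -/
inductive Gate (n : ℕ) : Type where
  | input : Fin n → Gate n
  | const : Bool → Gate n
  | and : ℕ → ℕ → Gate n
  | or : ℕ → ℕ → Gate n
  | not : ℕ → Gate n
deriving DecidableEq

/-- The indices of the incoming gates of a gate. -/
def Gate.deps {n : ℕ} : Gate n → List ℕ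
  | .and a b => [a, b]
  | .or a b => [a, b]
  | .not a => [a]
  | _ => []

/-- Inner gates are the non-input (and non-constant) gates, i.e. `∧`, `∨`, `¬` gates. -/
def Gate.isInner {n : ℕ} : Gate n → Bool
  | .and _ _ => true
  | .or _ _ => true
  | .not _ => true
  | _ => false

/-- A Boolean circuit over the standard basis on `n` input variables: a sequence of
gates (topologically sorted, so each gate only takes earlier gates as inputs,
which makes the underlying graph acyclic) together with a designated output gate. -/
structure Circuit (n : ℕ) : Type where
  size : ℕ
  gates : Fin size → Gate n
  out : Fin size
  wf : ∀ i : Fin size, ∀ j ∈ (gates i).deps, j < (i : ℕ)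

/-- The Boolean value of gate `i` of circuit `C` under input `x`. -/
def Circuit.evalGate {n : ℕ} (C : Circuit n) (x : Fin n → Bool) (i : ℕ) (h : i < C.size) :
    Bool :=
  match hg : C.gates ⟨i, h⟩ with
  | .input j => x j
  | .const b => b
  | .not a =>
      have ha : a < i := C.wf ⟨i, h⟩ a (by rw [hg]; simp [Gate.deps])
      ! C.evalGate x a (ha.trans h)
  | .and a b =>
      have ha : a < i := C.wf ⟨i, h⟩ a (by rw [hg]; simp [Gate.deps])
      have hb : b < i := C.wf ⟨i, h⟩ b (by rw [hg]; simp [Gate.deps])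
      C.evalGate x a (ha.trans h) && C.evalGate x b (hb.trans h)
  | .or a b =>
      have ha : a < i := C.wf ⟨i, h⟩ a (by rw [hg]; simp [Gate.deps])
      have hb : b < i := C.wf ⟨i, h⟩ b (by rw [hg]; simp [Gate.deps])
      C.evalGate x a (ha.trans h) || C.evalGate x b (hb.trans h)
termination_by i

/-- The output of circuit `C` on input `x`. -/
def Circuit.output {n : ℕ} (C : Circuit n) (x : Fin n → Bool) : Bool :=
  C.evalGate x C.out C.out.isLt

/-- `C` computes the Boolean function `f`. -/
def Circuit.Computes {n : ℕ} (C : Circuit n) (f : (Fin n → Bool) → Bool) : Prop :=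
  ∀ x, C.output x = f x

/-- The number of activated inner gates of `C` under input `x`. -/
def Circuit.energyAt {n : ℕ} (C : Circuit n) (x : Fin n → Bool) : ℕ :=
  (Finset.univ.filter fun i : Fin C.size =>
    (C.gates i).isInner = true ∧ C.evalGate x i i.isLt = true).card

/-- The energy complexity `EC(C)` of a circuit `C`: the maximum number of
activated inner gates over all inputs. -/
def Circuit.energy {n : ℕ} (C : Circuit n) : ℕ :=
  Finset.univ.sup fun x : Fin n → Bool => C.energyAt x

/-- The energy complexity `EC(f)` of a Boolean function `f`: the minimum of `EC(C)`
over all circuits `C` computing `f`. -/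
noncomputable def EC {n : ℕ} (f : (Fin n → Bool) → Bool) : ℕ :=
  sInf {k | ∃ C : Circuit n, C.Computes f ∧ C.energy = k}

namespace ECproof

/-! ### Unfolding lemmas for `Circuit.evalGate` -/

theorem evalGate_input {n : ℕ} (C : Circuit n) (x : Fin n → Bool) {i : ℕ} {h : i < C.size}
    {j : Fin n} (hg : C.gates ⟨i, h⟩ = .input j) : C.evalGate x i h = x j := by
  rw [Circuit.evalGate]
  split <;> simp_all

theorem evalGate_const {n : ℕ} (C : Circuit n) (x : Fin n → Bool) {i : ℕ} {h : i < C.size}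
    {b : Bool} (hg : C.gates ⟨i, h⟩ = .const b) : C.evalGate x i h = b := by
  rw [Circuit.evalGate]
  split <;> simp_all

theorem evalGate_not {n : ℕ} (C : Circuit n) (x : Fin n → Bool) {i : ℕ} {h : i < C.size}
    {a : ℕ} (hg : C.gates ⟨i, h⟩ = .not a) (ha : a < C.size) :
    C.evalGate x i h = ! C.evalGate x a ha := by
  rw [Circuit.evalGate]
  split <;> simp_all

theorem evalGate_and {n : ℕ} (C : Circuit n) (x : Fin n → Bool) {i : ℕ} {h : i < C.size}
    {a b : ℕ} (hg : C.gates ⟨i, h⟩ = .and a b) (ha : a < C.size) (hb : b < C.size) :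
    C.evalGate x i h = (C.evalGate x a ha && C.evalGate x b hb) := by
  rw [Circuit.evalGate]
  split <;> simp_all

theorem evalGate_or {n : ℕ} (C : Circuit n) (x : Fin n → Bool) {i : ℕ} {h : i < C.size}
    {a b : ℕ} (hg : C.gates ⟨i, h⟩ = .or a b) (ha : a < C.size) (hb : b < C.size) :
    C.evalGate x i h = (C.evalGate x a ha || C.evalGate x b hb) := by
  rw [Circuit.evalGate]
  split <;> simp_all

end ECproof

namespace ECproof

theorem EC_le_of_circuit {n : ℕ} (f : (Fin n → Bool) → Bool) (C : Circuit n)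
    (hC : C.Computes f) (k : ℕ) (hE : C.energy ≤ k) : EC f ≤ k :=
  le_trans (Nat.sInf_le ⟨C, hC, rfl⟩) hE

theorem output_eq {n : ℕ} (C : Circuit n) (x : Fin n → Bool) {k : ℕ}
    (hk : (C.out : ℕ) = k) (h : k < C.size) : C.output x = C.evalGate x k h := by
  subst hk; rfl

theorem energy_le {n : ℕ} (C : Circuit n) (k : ℕ) (h : ∀ x, C.energyAt x ≤ k) :
    C.energy ≤ k := Finset.sup_le fun x _ => h x

/-- the one-gate constant circuit -/
def constCircuit (n : ℕ) (b : Bool) : Circuit n where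
  size := 1
  gates := fun _ => .const b
  out := ⟨0, Nat.one_pos⟩
  wf := by intro i j hj; simp [Gate.deps] at hj

theorem stmt1_zero (f : (Fin 0 → Bool) → Bool) : EC f ≤ 3 * 0 - 2 := by
  apply EC_le_of_circuit f (constCircuit 0 (f (fun i => i.elim0)))
  · intro x
    have hx : x = fun i => i.elim0 := funext fun i => i.elim0
    rw [Circuit.output, evalGate_const _ _ rfl, hx]
  · apply energy_le
    intro x
    refine le_of_eq ?_
    rw [Circuit.energyAt, Finset.card_eq_zero, Finset.filter_eq_empty_iff]
    intro i _
    simp [constCircuit, Gate.isInner]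

/-- circuit for `n = 1`: input, its negation, and both constants -/
def oneCircuit (f : (Fin 1 → Bool) → Bool) : Circuit 1 where
  size := 4
  gates := fun i =>
    if i.val = 0 then .input 0
    else if i.val = 1 then .not 0
    else if i.val = 2 then .const true
    else .const false
  out :=
    if f (fun _ => false) then
      (if f (fun _ => true) then ⟨2, by norm_num⟩ else ⟨1, by norm_num⟩)
    else
      (if f (fun _ => true) then ⟨0, by norm_num⟩ else ⟨3, by norm_num⟩)
  wf := by
    intro i j hj
    fin_cases i <;> simp_all [Gate.deps]

theorem stmt1_one (f : (Fin 1 → Bool) → Bool) : EC f ≤ 3 * 1 - 2 := by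
  apply EC_le_of_circuit f (oneCircuit f)
  · intro x
    have hx : f x = f (fun _ => x 0) :=
      congrArg f (funext fun i => by rw [Subsingleton.elim i 0])
    have e0 : (oneCircuit f).evalGate x 0 (by norm_num [oneCircuit]) = x 0 :=
      evalGate_input _ _ (j := 0) rfl
    have e1 : (oneCircuit f).evalGate x 1 (by norm_num [oneCircuit]) = ! x 0 := by
      rw [evalGate_not _ _ (a := 0) rfl (by norm_num [oneCircuit]), e0]
    have e2 : (oneCircuit f).evalGate x 2 (by norm_num [oneCircuit]) = true :=
      evalGate_const _ _ rfl
    have e3 : (oneCircuit f).evalGate x 3 (by norm_num [oneCircuit]) = false :=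
      evalGate_const _ _ rfl
    rcases h0 : f (fun _ => false) with _ | _ <;> rcases h1 : f (fun _ => true) with _ | _
    · rw [output_eq _ x (k := 3) (by simp [oneCircuit, h0, h1]; try rfl) (by norm_num [oneCircuit])]
      refine e3.trans ?_
      rw [hx]; rcases hb : x 0 with _ | _ <;> simp [hb, h0, h1]
    · rw [output_eq _ x (k := 0) (by simp [oneCircuit, h0, h1]; try rfl) (by norm_num [oneCircuit])]
      refine e0.trans ?_
      rw [hx]; rcases hb : x 0 with _ | _ <;> simp [hb, h0, h1]
    · rw [output_eq _ x (k := 1) (by simp [oneCircuit, h0, h1]; try rfl) (by norm_num [oneCircuit])]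
      refine e1.trans ?_
      rw [hx]; rcases hb : x 0 with _ | _ <;> simp [hb, h0, h1]
    · rw [output_eq _ x (k := 2) (by simp [oneCircuit, h0, h1]; try rfl) (by norm_num [oneCircuit])]
      refine e2.trans ?_
      rw [hx]; rcases hb : x 0 with _ | _ <;> simp [hb, h0, h1]
  · apply energy_le
    intro x
    rw [Circuit.energyAt]
    have hsub : (Finset.univ.filter fun i : Fin (oneCircuit f).size =>
        ((oneCircuit f).gates i).isInner = true ∧
          (oneCircuit f).evalGate x i i.isLt = true) ⊆ {⟨1, by norm_num [oneCircuit]⟩} := by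
      intro i hi
      simp only [Finset.mem_filter] at hi
      obtain ⟨-, hinner, -⟩ := hi
      fin_cases i
      · exact Bool.noConfusion (show false = true from hinner)
      · exact Finset.mem_singleton_self _
      · exact Bool.noConfusion (show false = true from hinner)
      · exact Bool.noConfusion (show false = true from hinner)
    calc _ ≤ _ := Finset.card_le_card hsub
    _ ≤ 1 := by simp

end ECproof

namespace ECproof

/-! ### The main construction, for `n ≥ 2` -/

section Big

variable (n : ℕ) (f : (Fin n → Bool) → Bool)

/-- index of the gate computing the literal `x_j` (if `b`) or `¬ x_j` (if `¬b`). -/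
def litIdx (j : ℕ) (b : Bool) : ℕ := if b then j else n + j

/-- index of the gate computing the "reached" indicator of the trie node with
prefix `p` at depth `e` (`1 ≤ e ≤ n-1`). -/
def eIdx (e p : ℕ) : ℕ :=
  if e = 1 then (if p = 0 then n else 0) else 2*n+2 + (e-2) * 2^(n-1) + p

/-- index of the gate computing (reached `p` at depth `e`) ∧ `f x`, for `0 ≤ e ≤ n-1`. -/
def oIdx (e p : ℕ) : ℕ := 2*n+2 + (2*n-3-e) * 2^(n-1) + p

/-- the completion of the length-`n-1` prefix `p` by the last bit `b`. -/
def ext (p : ℕ) (b : Bool) : Fin n → Bool :=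
  fun j => if j.val = n-1 then b else p.testBit j.val

def qOf (i : ℕ) : ℕ := (i - (2*n+2)) / 2^(n-1)
def pOf (i : ℕ) : ℕ := (i - (2*n+2)) % 2^(n-1)

/-- the gate at index `i` of the big circuit. -/
def gateFn (i : ℕ) : Gate n :=
  if hi : i < n then .input ⟨i, hi⟩
  else if i < 2*n then .not (i - n)
  else if i = 2*n then .const true
  else if i = 2*n+1 then .const false
  else
    if qOf n i < n-2 then
      if pOf n i < 2^(qOf n i + 2) then
        .and (eIdx n (qOf n i + 1) (pOf n i % 2^(qOf n i + 1)))
             (litIdx n (qOf n i + 1) ((pOf n i).testBit (qOf n i + 1)))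
      else .const false
    else if qOf n i = n-2 then
      .and (eIdx n (n-1) (pOf n i))
        (if f (ext n (pOf n i) false) then
           (if f (ext n (pOf n i) true) then 2*n else n + (n-1))
         else
           (if f (ext n (pOf n i) true) then n-1 else 2*n+1))
    else
      if pOf n i < 2^(2*n-3 - qOf n i) then
        .or (oIdx n (2*n-3 - qOf n i + 1) (pOf n i))
            (oIdx n (2*n-3 - qOf n i + 1) (pOf n i + 2^(2*n-3 - qOf n i)))
      else .const false

def bigSize : ℕ := 2*n+2 + (2*n-2) * 2^(n-1)

theorem qOf_encode {q0 p0 : ℕ} (hp : p0 < 2^(n-1)) :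
    qOf n (2*n+2 + q0 * 2^(n-1) + p0) = q0 := by
  rw [qOf, Nat.add_assoc, Nat.add_sub_cancel_left, Nat.mul_comm,
    Nat.mul_add_div (Nat.pow_pos (by norm_num)), Nat.div_eq_of_lt hp, Nat.add_zero]

theorem pOf_encode {q0 p0 : ℕ} (hp : p0 < 2^(n-1)) :
    pOf n (2*n+2 + q0 * 2^(n-1) + p0) = p0 := by
  rw [pOf, Nat.add_assoc, Nat.add_sub_cancel_left, Nat.mul_comm,
    Nat.mul_add_mod, Nat.mod_eq_of_lt hp]

theorem gateFn_big {q0 p0 : ℕ} (hp : p0 < 2^(n-1)) :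
    gateFn n f (2*n+2 + q0 * 2^(n-1) + p0) =
      (if q0 < n-2 then
        (if p0 < 2^(q0 + 2) then
          Gate.and (eIdx n (q0 + 1) (p0 % 2^(q0 + 1))) (litIdx n (q0 + 1) (p0.testBit (q0 + 1)))
        else .const false)
      else if q0 = n-2 then
        .and (eIdx n (n-1) p0)
          (if f (ext n p0 false) then
             (if f (ext n p0 true) then 2*n else n + (n-1))
           else
             (if f (ext n p0 true) then n-1 else 2*n+1))
      else
        (if p0 < 2^(2*n-3 - q0) then
          .or (oIdx n (2*n-3 - q0 + 1) p0) (oIdx n (2*n-3 - q0 + 1) (p0 + 2^(2*n-3 - q0)))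
        else .const false)) := by
  rw [gateFn, dif_neg (by omega), if_neg (by omega), if_neg (by omega), if_neg (by omega),
    qOf_encode n hp, pOf_encode n hp]

theorem gateFn_input {j : ℕ} (hj : j < n) : gateFn n f j = .input ⟨j, hj⟩ := by
  rw [gateFn, dif_pos hj]

theorem gateFn_not {j : ℕ} (hj : j < n) : gateFn n f (n + j) = .not j := by
  rw [gateFn, dif_neg (by omega), if_pos (by omega), Nat.add_sub_cancel_left]

theorem gateFn_true : gateFn n f (2*n) = .const true := by
  rw [gateFn, dif_neg (by omega), if_neg (by omega), if_pos rfl]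

theorem gateFn_false : gateFn n f (2*n+1) = .const false := by
  rw [gateFn, dif_neg (by omega), if_neg (by omega), if_neg (by omega), if_pos rfl]

end Big

end ECproof

namespace ECproof

section Big2

variable (n : ℕ) (f : (Fin n → Bool) → Bool)

theorem pow_le_B {d : ℕ} (hd : d ≤ n-1) : 2^d ≤ 2^(n-1) :=
  Nat.pow_le_pow_right (by norm_num) hd

theorem eIdx_eq {d p : ℕ} (hd : 2 ≤ d) :
    eIdx n d p = 2*n+2 + (d-2) * 2^(n-1) + p := by
  rw [eIdx, if_neg (by omega)]

theorem gateFn_E (hn : 2 ≤ n) {d p : ℕ} (hd : 2 ≤ d) (hd2 : d ≤ n-1) (hp : p < 2^d) :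
    gateFn n f (eIdx n d p) =
      .and (eIdx n (d-1) (p % 2^(d-1))) (litIdx n (d-1) (p.testBit (d-1))) := by
  have hpB : p < 2^(n-1) := lt_of_lt_of_le hp (pow_le_B n hd2)
  rw [eIdx_eq n hd, gateFn_big n f hpB, if_pos (by omega)]
  have h1 : d - 2 + 2 = d := by omega
  have h2 : d - 2 + 1 = d - 1 := by omega
  rw [h1, h2, if_pos hp]

theorem oIdx_eq {e p : ℕ} : oIdx n e p = 2*n+2 + (2*n-3-e) * 2^(n-1) + p := rfl

theorem gateFn_A (hn : 2 ≤ n) {p : ℕ} (hp : p < 2^(n-1)) :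
    gateFn n f (oIdx n (n-1) p) =
      .and (eIdx n (n-1) p)
        (if f (ext n p false) then
           (if f (ext n p true) then 2*n else n + (n-1))
         else
           (if f (ext n p true) then n-1 else 2*n+1)) := by
  have h1 : 2*n-3-(n-1) = n-2 := by omega
  rw [oIdx_eq, h1, gateFn_big n f hp, if_neg (by omega), if_pos rfl]

theorem gateFn_O (hn : 2 ≤ n) {d p : ℕ} (hd : d ≤ n-2) (hp : p < 2^d) :
    gateFn n f (oIdx n d p) =
      .or (oIdx n (d+1) p) (oIdx n (d+1) (p + 2^d)) := by
  have hpB : p < 2^(n-1) := lt_of_lt_of_le hp (pow_le_B n (by omega))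
  have h1 : 2*n-3-(2*n-3-d) = d := by omega
  rw [oIdx_eq, gateFn_big n f hpB, if_neg (by omega), if_neg (by omega), h1, if_pos hp]

theorem litIdx_le {j : ℕ} (b : Bool) : litIdx n j b ≤ n + j := by
  rw [litIdx]; split <;> omega

theorem eIdx_lt_size (hn : 2 ≤ n) {d p : ℕ} (hd : 1 ≤ d) (hd2 : d ≤ n-1) (hp : p < 2^d) :
    eIdx n d p < bigSize n := by
  have hB : 0 < 2^(n-1) := Nat.pow_pos (by norm_num)
  rcases Nat.eq_or_lt_of_le hd with h | h
  · rw [eIdx, if_pos (by omega), bigSize]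
    split <;> omega
  · have h2 : 2 ≤ d := by omega
    rw [eIdx_eq n h2, bigSize]
    have hpB : p < 2^(n-1) := lt_of_lt_of_le hp (pow_le_B n hd2)
    have hmul : (d-2) * 2^(n-1) + 2^(n-1) ≤ (2*n-2) * 2^(n-1) := by
      rw [← Nat.succ_mul]
      exact Nat.mul_le_mul_right _ (by omega)
    omega

theorem oIdx_lt_size (hn : 2 ≤ n) {e p : ℕ} (he : e ≤ n-1) (hp : p < 2^(n-1)) :
    oIdx n e p < bigSize n := by
  rw [oIdx_eq, bigSize]
  have hmul : (2*n-3-e) * 2^(n-1) + 2^(n-1) ≤ (2*n-2) * 2^(n-1) := by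
    rw [← Nat.succ_mul]
    exact Nat.mul_le_mul_right _ (by omega)
  omega

theorem decomp (hn : 2 ≤ n) {i : ℕ} (hi1 : 2*n+2 ≤ i) (hi2 : i < bigSize n) :
    i = 2*n+2 + qOf n i * 2^(n-1) + pOf n i ∧ qOf n i < 2*n-2 ∧ pOf n i < 2^(n-1) := by
  have hB : 0 < 2^(n-1) := Nat.pow_pos (by norm_num)
  have key : qOf n i * 2^(n-1) + pOf n i = i - (2*n+2) := by
    rw [qOf, pOf, Nat.mul_comm]
    exact Nat.div_add_mod _ _
  rw [bigSize] at hi2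
  have hq : qOf n i < 2*n-2 := by
    by_contra hcon
    push_neg at hcon
    have := Nat.mul_le_mul_right (2^(n-1)) hcon
    omega
  exact ⟨by omega, hq, Nat.mod_lt _ hB⟩

theorem wf_big (hn : 2 ≤ n) (i : ℕ) (hi : i < bigSize n) :
    ∀ j ∈ (gateFn n f i).deps, j < i := by
  intro j hj
  have hB : 0 < 2^(n-1) := Nat.pow_pos (by norm_num)
  by_cases h1 : i < n
  · rw [gateFn_input n f h1] at hj; simp [Gate.deps] at hj
  by_cases h2 : i < 2*n
  · have hni : i = n + (i - n) := by omega
    rw [hni, gateFn_not n f (by omega)] at hj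
    simp [Gate.deps] at hj
    omega
  by_cases h3 : i = 2*n
  · rw [h3, gateFn_true n f] at hj; simp [Gate.deps] at hj
  by_cases h4 : i = 2*n+1
  · rw [h4, gateFn_false n f] at hj; simp [Gate.deps] at hj
  obtain ⟨hiv, hq, hp⟩ := decomp n hn (by omega) hi
  set q := qOf n i with hqdef
  set p := pOf n i with hpdef
  have hg : gateFn n f i = gateFn n f (2*n+2 + q * 2^(n-1) + p) := by rw [← hiv]
  rw [gateFn_big n f hp] at hg
  by_cases hq1 : q < n-2
  · rw [if_pos hq1] at hg
    by_cases hp2 : p < 2^(q+2)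
    · rw [if_pos hp2] at hg
      rw [hg] at hj
      simp [Gate.deps] at hj
      have hlit : litIdx n (q+1) (p.testBit (q+1)) ≤ n + (q+1) := litIdx_le n _
      have hmod : p % 2^(q+1) < 2^(q+1) := Nat.mod_lt _ (Nat.pow_pos (by norm_num))
      have hple : 2^(q+1) ≤ 2^(n-1) := Nat.pow_le_pow_right (by norm_num) (by omega)
      rcases hj with hj | hj
      · -- j = eIdx n (q+1) (p % 2^(q+1))
        subst hj
        rcases Nat.eq_or_lt_of_le (show 1 ≤ q+1 by omega) with hq11 | hq11
        · rw [eIdx, if_pos (by omega)]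
          split <;> omega
        · rw [eIdx_eq n (by omega)]
          have : (q+1-2) * 2^(n-1) + 2^(n-1) = q * 2^(n-1) := by
            rw [← Nat.succ_mul]
            congr 1
            omega
          omega
      · subst hj; omega
    · rw [if_neg hp2] at hg; rw [hg] at hj; simp [Gate.deps] at hj
  by_cases hq2 : q = n-2
  · rw [if_neg hq1, if_pos hq2] at hg
    rw [hg] at hj
    simp [Gate.deps] at hj
    rcases hj with hj | hj
    · subst hj
      rcases Nat.eq_or_lt_of_le (show 1 ≤ n-1 by omega) with hn1 | hn1
      · rw [eIdx, if_pos (by omega)]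
        split <;> omega
      · rw [eIdx_eq n (by omega)]
        have : (n-1-2) * 2^(n-1) + 2^(n-1) ≤ (n-2) * 2^(n-1) := by
          rw [← Nat.succ_mul]
          exact Nat.mul_le_mul_right _ (by omega)
        have h5 : q * 2^(n-1) = (n-2) * 2^(n-1) := by rw [hq2]
        omega
    · subst hj
      have : (if f (ext n p false) then
           (if f (ext n p true) then 2*n else n + (n-1))
         else
           (if f (ext n p true) then n-1 else 2*n+1)) ≤ 2*n+1 := by
        split <;> split <;> omega
      omega
  · rw [if_neg hq1, if_neg hq2] at hg
    by_cases hp2 : p < 2^(2*n-3-q)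
    · rw [if_pos hp2] at hg
      rw [hg] at hj
      simp [Gate.deps] at hj
      have hd2 : 2*n-3-q ≤ n-2 := by omega
      have hple : 2^(2*n-3-q) ≤ 2^(n-2) := Nat.pow_le_pow_right (by norm_num) hd2
      have hple2 : 2^(n-2) + 2^(n-2) = 2^(n-1) := by
        rw [show n-1 = n-2+1 by omega, Nat.pow_succ]
        omega
      have hkey : ∀ pp, pp < 2^(n-1) → oIdx n (2*n-3-q+1) pp < 2*n+2 + q * 2^(n-1) + p := by
        intro pp hpp
        rw [oIdx_eq]
        have h6 : 2*n-3-(2*n-3-q+1) = q-1 := by omega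
        rw [h6]
        have : (q-1) * 2^(n-1) + 2^(n-1) = q * 2^(n-1) := by
          rw [← Nat.succ_mul]
          congr 1
          omega
        omega
      have hside : 2^(n-2) ≤ 2^(n-1) := Nat.pow_le_pow_right (by norm_num) (by omega)
      rcases hj with hj | hj <;> subst hj
      · exact hiv ▸ hkey _ (by omega)
      · exact hiv ▸ hkey _ (by omega)
    · rw [if_neg hp2] at hg; rw [hg] at hj; simp [Gate.deps] at hj

/-- The big circuit computing `f` with low energy (`n ≥ 2`). -/
def bigCircuit (hn : 2 ≤ n) : Circuit n where
  size := bigSize n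
  gates := fun i => gateFn n f i.val
  out := ⟨oIdx n 0 0, oIdx_lt_size n hn (by omega) (Nat.pow_pos (by norm_num))⟩
  wf := fun i => wf_big n f hn i.val i.isLt

end Big2

end ECproof

namespace ECproof

theorem evalGate_congr {n : ℕ} (C : Circuit n) (x : Fin n → Bool) {a b : ℕ} (h : a = b)
    (ha : a < C.size) (hb : b < C.size) : C.evalGate x a ha = C.evalGate x b hb := by
  subst h; rfl

section Big3

variable (n : ℕ) (f : (Fin n → Bool) → Bool)

/-- `x` agrees with the length-`d` prefix `p`. -/
def matchB (x : Fin n → Bool) (d p : ℕ) : Bool :=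
  decide (∀ j : Fin n, j.val < d → x j = p.testBit j.val)

theorem matchB_zero (x : Fin n → Bool) (p : ℕ) : matchB n x 0 p = true := by
  simp [matchB]

theorem matchB_succ (x : Fin n → Bool) {d : ℕ} (hd : d < n) (p : ℕ) :
    matchB n x (d+1) p = (matchB n x d (p % 2^d) && (x ⟨d, hd⟩ == p.testBit d)) := by
  rw [Bool.eq_iff_iff]
  simp only [matchB, Bool.and_eq_true, decide_eq_true_eq, beq_iff_eq]
  constructor
  · intro h
    refine ⟨fun j hj => ?_, h ⟨d, hd⟩ (Nat.lt_succ_self d)⟩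
    rw [Nat.testBit_mod_two_pow]
    simp only [hj, decide_true, Bool.true_and]
    exact h j (by omega)
  · rintro ⟨h1, h2⟩ j hj
    rcases Nat.lt_or_ge j.val d with hlt | hge
    · have hx := h1 j hlt
      rw [Nat.testBit_mod_two_pow] at hx
      simpa [hlt] using hx
    · have hjd : j = ⟨d, hd⟩ := Fin.ext (show j.val = d by omega)
      subst hjd
      exact h2
  
theorem matchB_split (x : Fin n → Bool) {d p : ℕ} (hd : d < n) (hp : p < 2^d) :
    (matchB n x (d+1) p || matchB n x (d+1) (p + 2^d)) = matchB n x d p := by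
  rw [matchB_succ n x hd, matchB_succ n x hd]
  have e1 : p % 2^d = p := Nat.mod_eq_of_lt hp
  have e2 : (p + 2^d) % 2^d = p := by rw [Nat.add_mod_right, e1]
  have e3 : p.testBit d = false := Nat.testBit_lt_two_pow hp
  have e4 : (p + 2^d).testBit d = true := by
    rw [Nat.add_comm, Nat.testBit_two_pow_add_eq, e3]
    rfl
  rw [e1, e2, e3, e4]
  cases matchB n x d p <;> cases x ⟨d, hd⟩ <;> rfl

variable (hn : 2 ≤ n)

theorem size_big : (bigCircuit n f hn).size = bigSize n := rfl

theorem base_le_size : 2*n+2 ≤ bigSize n := Nat.le_add_right _ _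

theorem eval_input (x : Fin n → Bool) {j : ℕ} (hj : j < n) (h : j < (bigCircuit n f hn).size) :
    (bigCircuit n f hn).evalGate x j h = x ⟨j, hj⟩ := by
  have hg : (bigCircuit n f hn).gates ⟨j, h⟩ = .input ⟨j, hj⟩ := gateFn_input n f hj
  exact evalGate_input _ x hg

theorem eval_not (x : Fin n → Bool) {j : ℕ} (hj : j < n) (h : n + j < (bigCircuit n f hn).size) :
    (bigCircuit n f hn).evalGate x (n + j) h = ! x ⟨j, hj⟩ := by
  have hg : (bigCircuit n f hn).gates ⟨n + j, h⟩ = .not j := gateFn_not n f hj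
  rw [evalGate_not _ x hg (by rw [size_big]; have := base_le_size n; omega),
    eval_input n f hn x hj]

theorem eval_true (x : Fin n → Bool) (h : 2*n < (bigCircuit n f hn).size) :
    (bigCircuit n f hn).evalGate x (2*n) h = true :=
  evalGate_const _ x (gateFn_true n f)

theorem eval_false (x : Fin n → Bool) (h : 2*n+1 < (bigCircuit n f hn).size) :
    (bigCircuit n f hn).evalGate x (2*n+1) h = false :=
  evalGate_const _ x (gateFn_false n f)

theorem eval_lit (x : Fin n → Bool) {j : ℕ} (hj : j < n) (b : Bool)
    (h : litIdx n j b < (bigCircuit n f hn).size) :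
    (bigCircuit n f hn).evalGate x (litIdx n j b) h = (x ⟨j, hj⟩ == b) := by
  rcases b with _ | _
  · have he : litIdx n j false = n + j := by rw [litIdx]; simp
    rw [evalGate_congr _ x he h (he ▸ h), eval_not n f hn x hj]
    cases x ⟨j, hj⟩ <;> rfl
  · have he : litIdx n j true = j := by rw [litIdx]; simp
    rw [evalGate_congr _ x he h (he ▸ h), eval_input n f hn x hj]
    cases x ⟨j, hj⟩ <;> rfl

theorem eval_eIdx (x : Fin n → Bool) :
    ∀ d, 1 ≤ d → d ≤ n-1 → ∀ p, p < 2^d → ∀ h : eIdx n d p < (bigCircuit n f hn).size,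
      (bigCircuit n f hn).evalGate x (eIdx n d p) h = matchB n x d p := by
  intro d hd
  induction d, hd using Nat.le_induction with
  | base =>
    intro _ p hp h
    have h0n : 0 < n := by omega
    have hm : matchB n x 1 p = (x ⟨0, h0n⟩ == p.testBit 0) := by
      rw [show (1:ℕ) = 0 + 1 from rfl, matchB_succ n x h0n, matchB_zero]
      rfl
    rcases (by omega : p = 0 ∨ p = 1) with hp1 | hp1 <;> subst hp1
    · have he : eIdx n 1 0 = n + 0 := by rw [eIdx]; simp
      rw [evalGate_congr _ x he h (he ▸ h), eval_not n f hn x h0n, hm]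
      simp [Nat.testBit]
    · have he : eIdx n 1 1 = 0 := by rw [eIdx]; simp
      rw [evalGate_congr _ x he h (he ▸ h), eval_input n f hn x h0n, hm]
      have : Nat.testBit 1 0 = true := rfl
      rw [this]
      cases x ⟨0, h0n⟩ <;> rfl
  | succ d hd1 ih =>
    intro hd2 p hp h
    have hdn : d < n := by omega
    have hg : (bigCircuit n f hn).gates ⟨eIdx n (d+1) p, h⟩ =
        .and (eIdx n (d+1-1) (p % 2^(d+1-1))) (litIdx n (d+1-1) (p.testBit (d+1-1))) :=
      gateFn_E n f hn (by omega) hd2 hp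
    have hsimp : d + 1 - 1 = d := rfl
    rw [hsimp] at hg
    have hmod : p % 2^d < 2^d := Nat.mod_lt _ (Nat.pow_pos (by norm_num))
    have ha : eIdx n d (p % 2^d) < (bigCircuit n f hn).size :=
      eIdx_lt_size n hn (by omega) (by omega) hmod
    have hb : litIdx n d (p.testBit d) < (bigCircuit n f hn).size := by
      have := litIdx_le n (j := d) (p.testBit d)
      have := base_le_size n
      rw [size_big]
      omega
    rw [evalGate_and _ x hg ha hb, ih (by omega) _ hmod ha, eval_lit n f hn x hdn _ hb,
      matchB_succ n x hdn]

theorem f_of_match (x : Fin n → Bool) {p : ℕ} (hn1 : n-1 < n)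
    (hm : matchB n x (n-1) p = true) :
    f x = cond (x ⟨n-1, hn1⟩) (f (ext n p true)) (f (ext n p false)) := by
  have hx : x = ext n p (x ⟨n-1, hn1⟩) := by
    funext j
    rw [ext]
    by_cases hj : j.val = n-1
    · rw [if_pos hj]
      congr 1
      exact Fin.ext hj
    · rw [if_neg hj]
      have hjlt : j.val < n-1 := by have := j.isLt; omega
      exact of_decide_eq_true hm j hjlt
  conv_lhs => rw [hx]
  cases x ⟨n-1, hn1⟩ <;> rfl

theorem eval_oIdx (x : Fin n → Bool) :
    ∀ k d p, d ≤ n-1 → n-1-d = k → p < 2^d → ∀ h : oIdx n d p < (bigCircuit n f hn).size,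
      (bigCircuit n f hn).evalGate x (oIdx n d p) h = (matchB n x d p && f x) := by
  intro k
  induction k with
  | zero =>
    intro d p hd hk hp h
    have hdn : d = n-1 := by omega
    subst hdn
    have hn1 : n-1 < n := by omega
    have hg : (bigCircuit n f hn).gates ⟨oIdx n (n-1) p, h⟩ =
        .and (eIdx n (n-1) p)
          (if f (ext n p false) then
             (if f (ext n p true) then 2*n else n + (n-1))
           else
             (if f (ext n p true) then n-1 else 2*n+1)) :=
      gateFn_A n f hn hp
    have hbase := base_le_size n
    rcases hc0 : f (ext n p false) with _ | _ <;> rcases hc1 : f (ext n p true) with _ | _ <;>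
      simp only [hc0, hc1, Bool.false_eq_true, Bool.true_eq_false, if_true, if_false] at hg
    · -- c0 = false, c1 = false : arg = 2n+1
      rw [evalGate_and _ x hg (show eIdx n (n-1) p < (bigCircuit n f hn).size from eIdx_lt_size n hn (by omega) (le_refl _) hp)
        (by rw [size_big]; omega), eval_eIdx n f hn x (n-1) (by omega) (le_refl _) p hp,
        eval_false n f hn x]
      rcases hm : matchB n x (n-1) p with _ | _
      · rfl
      · rw [f_of_match n f x hn1 hm, hc0, hc1]
        cases x ⟨n-1, hn1⟩ <;> rfl
    · -- c0 = false, c1 = true : arg = n-1 (input x_{n-1})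
      rw [evalGate_and _ x hg (show eIdx n (n-1) p < (bigCircuit n f hn).size from eIdx_lt_size n hn (by omega) (le_refl _) hp)
        (by rw [size_big]; omega), eval_eIdx n f hn x (n-1) (by omega) (le_refl _) p hp,
        eval_input n f hn x hn1]
      rcases hm : matchB n x (n-1) p with _ | _
      · rfl
      · rw [f_of_match n f x hn1 hm, hc0, hc1]
        cases x ⟨n-1, hn1⟩ <;> rfl
    · -- c0 = true, c1 = false : arg = n + (n-1)  (¬ x_{n-1})
      rw [evalGate_and _ x hg (show eIdx n (n-1) p < (bigCircuit n f hn).size from eIdx_lt_size n hn (by omega) (le_refl _) hp)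
        (by rw [size_big]; omega), eval_eIdx n f hn x (n-1) (by omega) (le_refl _) p hp,
        eval_not n f hn x hn1]
      rcases hm : matchB n x (n-1) p with _ | _
      · rfl
      · rw [f_of_match n f x hn1 hm, hc0, hc1]
        cases x ⟨n-1, hn1⟩ <;> rfl
    · -- c0 = true, c1 = true : arg = 2n (const true)
      rw [evalGate_and _ x hg (show eIdx n (n-1) p < (bigCircuit n f hn).size from eIdx_lt_size n hn (by omega) (le_refl _) hp)
        (by rw [size_big]; omega), eval_eIdx n f hn x (n-1) (by omega) (le_refl _) p hp,
        eval_true n f hn x]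
      rcases hm : matchB n x (n-1) p with _ | _
      · rfl
      · rw [f_of_match n f x hn1 hm, hc0, hc1]
        cases x ⟨n-1, hn1⟩ <;> rfl
  | succ k ih =>
    intro d p hd hk hp h
    have hd2 : d ≤ n-2 := by omega
    have hdn : d < n := by omega
    have hps : (2:ℕ)^(d+1) = 2^d * 2 := pow_succ 2 d
    have hg : (bigCircuit n f hn).gates ⟨oIdx n d p, h⟩ =
        .or (oIdx n (d+1) p) (oIdx n (d+1) (p + 2^d)) := gateFn_O n f hn hd2 hp
    have hB : (2:ℕ)^(d+1) ≤ 2^(n-1) := Nat.pow_le_pow_right (by norm_num) (by omega)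
    have hBB : (0:ℕ) < 2^(n-1) := Nat.pow_pos (by norm_num)
    have ha : oIdx n (d+1) p < (bigCircuit n f hn).size :=
      oIdx_lt_size n hn (by omega) (by omega)
    have hb : oIdx n (d+1) (p + 2^d) < (bigCircuit n f hn).size :=
      oIdx_lt_size n hn (by omega) (by omega)
    rw [evalGate_or _ x hg ha hb,
      ih (d+1) p (by omega) (by omega) (by omega) ha,
      ih (d+1) (p + 2^d) (by omega) (by omega) (by omega) hb,
      ← Bool.and_or_distrib_right, matchB_split n x hdn hp]

end Big3

end ECproof

namespace ECproof

section Big4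

variable (n : ℕ) (f : (Fin n → Bool) → Bool) (hn : 2 ≤ n)

theorem big_computes : (bigCircuit n f hn).Computes f := by
  intro x
  rw [Circuit.output]
  have hout : ((bigCircuit n f hn).out : ℕ) = oIdx n 0 0 := rfl
  rw [evalGate_congr _ x hout _ (hout ▸ (bigCircuit n f hn).out.isLt),
    eval_oIdx n f hn x (n-1) 0 0 (by omega) (by omega) (by norm_num), matchB_zero,
    Bool.true_and]

/-- the value of the length-`d` prefix of the input `x`. -/
def Mv (x : Fin n → Bool) : ℕ → ℕ
  | 0 => 0
  | d+1 => Mv x d + (if h : d < n then (if x ⟨d, h⟩ then 2^d else 0) else 0)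

theorem Mv_lt (x : Fin n → Bool) (d : ℕ) : Mv n x d < 2^d := by
  induction d with
  | zero => norm_num [Mv]
  | succ d ih =>
    have hps : (2:ℕ)^(d+1) = 2^d * 2 := pow_succ 2 d
    rw [Mv]
    split
    · split <;> omega
    · omega

theorem matchB_Mv (x : Fin n → Bool) : ∀ d, d ≤ n → matchB n x d (Mv n x d) = true := by
  intro d
  induction d with
  | zero => intro _; exact matchB_zero n x _
  | succ d ih =>
    intro hd
    have hdn : d < n := by omega
    have hMlt := Mv_lt n x d
    rw [matchB_succ n x hdn]
    rcases hx : x ⟨d, hdn⟩ with _ | _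
    · have hMv : Mv n x (d+1) = Mv n x d := by rw [Mv, dif_pos hdn, hx]; simp
      have e1 : Mv n x (d+1) % 2^d = Mv n x d := by rw [hMv, Nat.mod_eq_of_lt hMlt]
      have e2 : (Mv n x (d+1)).testBit d = false := by
        rw [hMv]; exact Nat.testBit_lt_two_pow hMlt
      rw [e1, e2, ih (by omega)]
      rfl
    · have hMv : Mv n x (d+1) = Mv n x d + 2^d := by rw [Mv, dif_pos hdn, hx]; simp
      have e1 : Mv n x (d+1) % 2^d = Mv n x d := by
        rw [hMv, Nat.add_mod_right, Nat.mod_eq_of_lt hMlt]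
      have e2 : (Mv n x (d+1)).testBit d = true := by
        rw [hMv, Nat.add_comm, Nat.testBit_two_pow_add_eq, Nat.testBit_lt_two_pow hMlt]
        rfl
      rw [e1, e2, ih (by omega)]
      rfl

theorem matchB_eq_Mv (x : Fin n → Bool) :
    ∀ d, d ≤ n → ∀ p, p < 2^d → matchB n x d p = true → p = Mv n x d := by
  intro d
  induction d with
  | zero => intro _ p hp _; interval_cases p; rfl
  | succ d ih =>
    intro hd p hp hm
    have hdn : d < n := by omega
    have hps : (2:ℕ)^(d+1) = 2^d * 2 := pow_succ 2 d
    have hpow : (0:ℕ) < 2^d := Nat.pow_pos (by norm_num)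
    rw [matchB_succ n x hdn, Bool.and_eq_true] at hm
    obtain ⟨h1, h2⟩ := hm
    have hmlt : p % 2^d < 2^d := Nat.mod_lt _ hpow
    have hmod : p % 2^d = Mv n x d := ih (by omega) _ hmlt h1
    have hdm := Nat.div_add_mod p (2^d)
    have hlt2 : p / 2^d < 2 := by
      by_contra hcon
      push_neg at hcon
      have := (Nat.le_div_iff_mul_le hpow).mp hcon
      omega
    have hq01 : p / 2^d = 0 ∨ p / 2^d = 1 :=
      (Nat.le_one_iff_eq_zero_or_eq_one).mp (Nat.lt_succ_iff.mp hlt2)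
    rcases hq01 with hq | hq
    · rw [hq, Nat.mul_zero] at hdm
      have hpeq : p = p % 2^d := by omega
      have htb : p.testBit d = false := Nat.testBit_lt_two_pow (by omega)
      rw [htb] at h2
      have hxd : x ⟨d, hdn⟩ = false := by simpa using h2
      have hMv : Mv n x (d+1) = Mv n x d := by rw [Mv, dif_pos hdn, hxd]; simp
      omega
    · rw [hq, Nat.mul_one] at hdm
      have hpeq : p = 2^d + p % 2^d := by omega
      have htb : p.testBit d = true := by
        rw [hpeq, Nat.testBit_two_pow_add_eq, Nat.testBit_lt_two_pow hmlt]
        rfl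
      rw [htb] at h2
      have hxd : x ⟨d, hdn⟩ = true := by simpa using h2
      have hMv : Mv n x (d+1) = Mv n x d + 2^d := by rw [Mv, dif_pos hdn, hxd]; simp
      omega

theorem energyAt_big (x : Fin n → Bool) : (bigCircuit n f hn).energyAt x ≤ 3*n-2 := by
  classical
  set C := bigCircuit n f hn with hC
  set S : Finset ℕ :=
    ((Finset.range n).image fun j => n + j) ∪
    ((Finset.Icc 2 (n-1)).image fun d => eIdx n d (Mv n x d)) ∪
    ((Finset.range n).image fun d => oIdx n d (Mv n x d)) with hS
  have hcard : S.card ≤ 3*n-2 := by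
    have h1 := Finset.card_union_le
      (((Finset.range n).image fun j => n + j) ∪
        ((Finset.Icc 2 (n-1)).image fun d => eIdx n d (Mv n x d)))
      ((Finset.range n).image fun d => oIdx n d (Mv n x d))
    have h2 := Finset.card_union_le ((Finset.range n).image fun j => n + j)
      ((Finset.Icc 2 (n-1)).image fun d => eIdx n d (Mv n x d))
    have h3 := Finset.card_image_le (s := Finset.range n) (f := fun j => n + j)
    have h4 := Finset.card_image_le (s := Finset.Icc 2 (n-1))
      (f := fun d => eIdx n d (Mv n x d))
    have h5 := Finset.card_image_le (s := Finset.range n)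
      (f := fun d => oIdx n d (Mv n x d))
    rw [Finset.card_range] at h3 h5
    rw [Nat.card_Icc] at h4
    rw [hS]
    omega
  rw [Circuit.energyAt]
  have hmaps : ∀ i ∈ (Finset.univ.filter fun i : Fin C.size =>
      (C.gates i).isInner = true ∧ C.evalGate x i i.isLt = true), (i : ℕ) ∈ S := by
    intro i hi
    rw [Finset.mem_filter] at hi
    obtain ⟨-, hinner, heval⟩ := hi
    have hilt : (i : ℕ) < bigSize n := i.isLt
    have hgi : C.gates i = gateFn n f i.val := rfl
    by_cases h1 : (i : ℕ) < n
    · rw [hgi, gateFn_input n f h1] at hinner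
      exact absurd hinner (by simp [Gate.isInner])
    by_cases h2 : (i : ℕ) < 2*n
    · refine Finset.mem_union_left _ (Finset.mem_union_left _ ?_)
      rw [Finset.mem_image]
      exact ⟨(i : ℕ) - n, Finset.mem_range.mpr (by omega), by omega⟩
    by_cases h3 : (i : ℕ) = 2*n
    · rw [hgi, h3, gateFn_true n f] at hinner
      exact absurd hinner (by simp [Gate.isInner])
    by_cases h4 : (i : ℕ) = 2*n+1
    · rw [hgi, h4, gateFn_false n f] at hinner
      exact absurd hinner (by simp [Gate.isInner])
    obtain ⟨hiv, hq, hp⟩ := decomp n hn (by omega) hilt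
    set q := qOf n (i : ℕ) with hqdef
    set p := pOf n (i : ℕ) with hpdef
    by_cases hq1 : q < n-2
    · by_cases hp2 : p < 2^(q+2)
      · -- an E-gate at depth q+2
        have hie : (i : ℕ) = eIdx n (q+2) p := by
          rw [eIdx_eq n (by omega), show q+2-2 = q from rfl]
          omega
        have hlt : eIdx n (q+2) p < C.size := hie ▸ i.isLt
        have hev : matchB n x (q+2) p = true := by
          rw [← eval_eIdx n f hn x (q+2) (by omega) (by omega) p hp2 hlt,
            ← evalGate_congr C x hie i.isLt hlt]
          exact heval
        have hpM : p = Mv n x (q+2) := matchB_eq_Mv n x (q+2) (by omega) p hp2 hev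
        refine Finset.mem_union_left _ (Finset.mem_union_right _ ?_)
        rw [Finset.mem_image]
        exact ⟨q+2, Finset.mem_Icc.mpr (by omega), by rw [← hpM, ← hie]⟩
      · have hg : C.gates i = Gate.const false := by
          rw [hgi]
          have : gateFn n f (i : ℕ) = gateFn n f (2*n+2 + q * 2^(n-1) + p) := by rw [← hiv]
          rw [this, gateFn_big n f hp, if_pos hq1, if_neg hp2]
        rw [hg] at hinner
        exact absurd hinner (by simp [Gate.isInner])
    by_cases hq2 : q = n-2
    · -- the output AND gate at depth n-1
      have hie : (i : ℕ) = oIdx n (n-1) p := by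
        rw [oIdx_eq]
        have heq : 2*n-3-(n-1) = n-2 := by omega
        rw [heq, ← hq2]
        omega
      have hlt : oIdx n (n-1) p < C.size := hie ▸ i.isLt
      have hev : (matchB n x (n-1) p && f x) = true := by
        rw [← eval_oIdx n f hn x 0 (n-1) p (by omega) (by omega) hp hlt,
          ← evalGate_congr C x hie i.isLt hlt]
        exact heval
      rw [Bool.and_eq_true] at hev
      have hpM : p = Mv n x (n-1) := matchB_eq_Mv n x (n-1) (by omega) p hp hev.1
      refine Finset.mem_union_right _ ?_
      rw [Finset.mem_image]
      exact ⟨n-1, Finset.mem_range.mpr (by omega), by rw [← hpM, ← hie]⟩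
    · -- an OR gate at depth d = 2n-3-q ≤ n-2
      set d := 2*n-3-q with hddef
      by_cases hp2 : p < 2^d
      · have hie : (i : ℕ) = oIdx n d p := by
          rw [oIdx_eq]
          have : 2*n-3-d = q := by omega
          rw [this]
          omega
        have hlt : oIdx n d p < C.size := hie ▸ i.isLt
        have hev : (matchB n x d p && f x) = true := by
          rw [← eval_oIdx n f hn x (n-1-d) d p (by omega) rfl hp2 hlt,
            ← evalGate_congr C x hie i.isLt hlt]
          exact heval
        rw [Bool.and_eq_true] at hev
        have hpM : p = Mv n x d := matchB_eq_Mv n x d (by omega) p hp2 hev.1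
        refine Finset.mem_union_right _ ?_
        rw [Finset.mem_image]
        exact ⟨d, Finset.mem_range.mpr (by omega), by rw [← hpM, ← hie]⟩
      · have hg : C.gates i = Gate.const false := by
          rw [hgi]
          have : gateFn n f (i : ℕ) = gateFn n f (2*n+2 + q * 2^(n-1) + p) := by rw [← hiv]
          rw [this, gateFn_big n f hp, if_neg hq1, if_neg hq2, if_neg hp2]
        rw [hg] at hinner
        exact absurd hinner (by simp [Gate.isInner])
  exact le_trans (Finset.card_le_card_of_injOn (fun i => (i : ℕ)) hmaps
    (fun a _ b _ hab => Fin.ext hab)) hcard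

end Big4

end ECproof

open ECproof in
theorem stmt1' (n : ℕ) (f : (Fin n → Bool) → Bool) :
    EC f ≤ 3 * n - 2 := by
  match n, f with
  | 0, f => exact stmt1_zero f
  | 1, f => exact stmt1_one f
  | (m+2), f =>
    have hn : 2 ≤ m+2 := by omega
    exact EC_le_of_circuit f (bigCircuit (m+2) f hn) (big_computes (m+2) f hn) _
      (energy_le _ _ (energyAt_big (m+2) f hn))

/-- For any Boolean function `f : {0,1}^n → {0,1}`,
`EC(f) ≤ 3n − 2`. -/
theorem stmt1 (n : ℕ) (f : (Fin n → Bool) → Bool) :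
    EC f ≤ 3 * n - 2 := stmt1' n f
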